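/- arXiv:2309.15659 — 2 statements merged into one kernel-verified Lean document; each statement's English description precedes it below -/
import Mathlib

section
/- Let b ∈ ℝ^n, κ > 0, and let γ* ≥ 0 be an optimal dual variable for the problem min_{‖a‖₁ ≤ κ} (1/2)‖a − b‖₂². Then γ* ≤ ‖b‖₂² / (2κ). -/
/-- Bound on the optimal dual variable for the projection of `b` onto the ℓ1-ball of
radius `κ`: if `γ* ≥ 0` maximizes the dual objective
`γ ↦ −κγ + inf_a [(1/2)‖a − b‖₂² + γ‖a‖₁]` over `γ ≥ 0`, then `γ* ≤ ‖b‖₂²/(2κ)`. -/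
theorem dual_variable_bound {n : ℕ} (b : Fin n → ℝ) (κ : ℝ) (hκ : 0 < κ)
    (D : ℝ → ℝ)
    (hD : D = fun γ => -κ * γ +
      ⨅ a : EuclideanSpace ℝ (Fin n), ((1/2) * ∑ m, (a m - b m)^2 + γ * ∑ m, |a m|))
    (γstar : ℝ) (hγstar : 0 ≤ γstar)
    (hopt : ∀ γ : ℝ, 0 ≤ γ → D γ ≤ D γstar) :
    γstar ≤ (∑ m, (b m)^2) / (2 * κ) := by
  set f : ℝ → EuclideanSpace ℝ (Fin n) → ℝ :=
    fun γ a => (1/2) * ∑ m, (a m - b m)^2 + γ * ∑ m, |a m| with hf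
  have hnonneg : ∀ γ : ℝ, 0 ≤ γ → ∀ a, (0:ℝ) ≤ f γ a := by
    intro γ hγ a
    have h1 : (0:ℝ) ≤ ∑ m, (a m - b m)^2 :=
      Finset.sum_nonneg (fun m _ => sq_nonneg _)
    have h2 : (0:ℝ) ≤ ∑ m, |a m| :=
      Finset.sum_nonneg (fun m _ => abs_nonneg _)
    positivity
  have hbdd : ∀ γ : ℝ, 0 ≤ γ → BddBelow (Set.range (f γ)) := by
    intro γ hγ
    exact ⟨0, fun x ⟨a, ha⟩ => ha ▸ hnonneg γ hγ a⟩
  -- D 0 = 0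
  have hD0 : D 0 = 0 := by
    rw [hD]
    simp only [neg_mul, mul_zero, neg_zero, zero_add]
    apply le_antisymm
    · have := ciInf_le (hbdd 0 le_rfl) (WithLp.toLp 2 b : EuclideanSpace ℝ (Fin n))
      simpa [hf] using this
    · exact le_ciInf (fun a => hnonneg 0 le_rfl a)
  -- D γstar ≤ -κ*γstar + (1/2)*∑ b²
  have hDg : D γstar ≤ -κ * γstar + (1/2) * ∑ m, (b m)^2 := by
    rw [hD]
    have := ciInf_le (hbdd γstar hγstar) (0 : EuclideanSpace ℝ (Fin n))
    have h0 : f γstar 0 = (1/2) * ∑ m, (b m)^2 := by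
      simp [hf]
    calc -κ * γstar + ⨅ a : EuclideanSpace ℝ (Fin n), f γstar a
        ≤ -κ * γstar + f γstar 0 := by linarith
      _ = -κ * γstar + (1/2) * ∑ m, (b m)^2 := by rw [h0]
  have key : D 0 ≤ D γstar := hopt 0 le_rfl
  rw [hD0] at key
  have h2κ : (0:ℝ) < 2 * κ := by linarith
  rw [le_div_iff₀ h2κ]
  nlinarith [key, hDg]
end

section
/- Assume each L_i is differentiable with L-Lipschitz gradient in θ_i, ρ > 5L, the global loss L(θ, {w_i}) = Σ_i L_i(θ, w_i) is bounded below by a finite value L̲, and the dual variables satisfy λ_i = −∇_{θ_i} L_i(θ_i, w_i) − L(θ_i − θ). Then the global augmented Lagrangian satisfies L̃(θ, {θ_i}, {w_i}, {λ_i}) ≥ L(θ, {w_i}) + ((ρ − 5L)/2) Σ_i ‖θ_i − θ‖² ≥ L̲. -/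
open scoped RealInnerProductSpace NNReal

/-- Descent-type lemma: if `f` is differentiable with `L`-Lipschitz gradient, then
`f y ≥ f x + ⟪∇f x, y - x⟫ - L‖y - x‖²`. -/
lemma descent_aux {E : Type*} [NormedAddCommGroup E] [InnerProductSpace ℝ E] [CompleteSpace E]
    {f : E → ℝ} (hf : Differentiable ℝ f) {L : ℝ≥0}
    (hL : LipschitzWith L (gradient f)) (x y : E) :
    f y ≤ f x + ⟪gradient f x, y - x⟫ + (L : ℝ) * ‖y - x‖ ^ 2 := by
  have hfd : ∀ z, fderiv ℝ f z = InnerProductSpace.toDual ℝ E (gradient f z) := by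
    intro z
    simp [gradient]
  have key : ‖f y - f x - (fderiv ℝ f x) (y - x)‖ ≤ ((L : ℝ) * ‖y - x‖) * ‖y - x‖ := by
    apply Convex.norm_image_sub_le_of_norm_fderiv_le'
      (s := Metric.closedBall x ‖y - x‖) (fun z _ => hf z) ?_ (convex_closedBall _ _)
      (Metric.mem_closedBall_self (norm_nonneg _))
      (by simp [Metric.mem_closedBall, dist_eq_norm])
    intro z hz
    have h1 : fderiv ℝ f z - fderiv ℝ f x
        = InnerProductSpace.toDual ℝ E (gradient f z - gradient f x) := by
      rw [hfd, hfd, map_sub]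
    rw [h1]
    have h2 : ‖InnerProductSpace.toDual ℝ E (gradient f z - gradient f x)‖
        = ‖gradient f z - gradient f x‖ := (InnerProductSpace.toDual ℝ E).norm_map _
    rw [h2]
    have h3 := hL.dist_le_mul z x
    rw [dist_eq_norm, dist_eq_norm] at h3
    refine h3.trans ?_
    have := Metric.mem_closedBall.mp hz
    rw [dist_eq_norm] at this
    exact mul_le_mul_of_nonneg_left this L.coe_nonneg
  have happ : (fderiv ℝ f x) (y - x) = ⟪gradient f x, y - x⟫ := by
    rw [hfd]; rfl
  rw [happ] at key
  have := (abs_le.mp (by rwa [Real.norm_eq_abs] at key)).2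
  nlinarith [this]

/-- Lower bound for the global augmented Lagrangian: if each `L_i` has `L`-Lipschitz
gradient in `θ_i`, `ρ > 5L`, the global loss is bounded below by `L̲`, and the dual
variables satisfy `λ_i = −∇_{θ_i} L_i(θ_i, w_i) − L(θ_i − θ)`, then
`L̃ ≥ L(θ, {w_i}) + ((ρ − 5L)/2) Σ_i ‖θ_i − θ‖² ≥ L̲`. -/
theorem aug_lagrangian_lower_bound {n d₁ d₂ : ℕ}
    (Li : Fin n → EuclideanSpace ℝ (Fin d₁) × EuclideanSpace ℝ (Fin d₂) → ℝ)
    (hdiff : ∀ i, Differentiable ℝ (Li i))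
    (L : ℝ≥0)
    (hLip : ∀ i w, LipschitzWith L (gradient (fun θ' => Li i (θ', w))))
    (ρ : ℝ) (hρ : ρ > 5 * L)
    (Lbar : ℝ)
    (hlb : ∀ (θ : EuclideanSpace ℝ (Fin d₁)) (w : Fin n → EuclideanSpace ℝ (Fin d₂)),
      Lbar ≤ ∑ i, Li i (θ, w i))
    (θ : EuclideanSpace ℝ (Fin d₁))
    (θi lam : Fin n → EuclideanSpace ℝ (Fin d₁))
    (wi : Fin n → EuclideanSpace ℝ (Fin d₂))
    (hlam : ∀ i, lam i = -gradient (fun θ' => Li i (θ', wi i)) (θi i)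
      - (L : ℝ) • (θi i - θ)) :
    (∑ i, (Li i (θi i, wi i) + ⟪lam i, θi i - θ⟫ + (ρ / 2) * ‖θi i - θ‖^2)) ≥
      (∑ i, Li i (θ, wi i)) + ((ρ - 5 * L) / 2) * ∑ i, ‖θi i - θ‖^2 ∧
    (∑ i, Li i (θ, wi i)) + ((ρ - 5 * L) / 2) * ∑ i, ‖θi i - θ‖^2 ≥ Lbar := by
  have hL0 : (0:ℝ) ≤ L := L.coe_nonneg
  have hterm : ∀ i, Li i (θ, wi i) + ((ρ - 5 * L) / 2) * ‖θi i - θ‖^2 ≤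
      Li i (θi i, wi i) + ⟪lam i, θi i - θ⟫ + (ρ / 2) * ‖θi i - θ‖^2 := by
    intro i
    have hdi : Differentiable ℝ (fun θ' => Li i (θ', wi i)) :=
      fun z => (hdiff i).differentiableAt.comp z
        ((differentiableAt_id.prodMk (differentiableAt_const _)))
    have hdesc := descent_aux hdi (hLip i (wi i)) (θi i) θ
    have hnorm : ‖θ - θi i‖ = ‖θi i - θ‖ := norm_sub_rev _ _
    rw [hnorm] at hdesc
    have hgrad : ⟪gradient (fun θ' => Li i (θ', wi i)) (θi i), θ - θi i⟫
        = -⟪gradient (fun θ' => Li i (θ', wi i)) (θi i), θi i - θ⟫ := by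
      rw [← inner_neg_right]; congr 1; abel
    rw [hgrad] at hdesc
    have hinner : ⟪lam i, θi i - θ⟫ =
        -⟪gradient (fun θ' => Li i (θ', wi i)) (θi i), θi i - θ⟫
        - (L : ℝ) * ‖θi i - θ‖^2 := by
      rw [hlam i, inner_sub_left, inner_neg_left, real_inner_smul_left,
        real_inner_self_eq_norm_sq]
    rw [hinner]
    nlinarith [sq_nonneg ‖θi i - θ‖]
  constructor
  · calc (∑ i, Li i (θ, wi i)) + ((ρ - 5 * L) / 2) * ∑ i, ‖θi i - θ‖^2
        = ∑ i, (Li i (θ, wi i) + ((ρ - 5 * L) / 2) * ‖θi i - θ‖^2) := by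
          rw [Finset.sum_add_distrib, Finset.mul_sum]
      _ ≤ ∑ i, (Li i (θi i, wi i) + ⟪lam i, θi i - θ⟫ + (ρ / 2) * ‖θi i - θ‖^2) :=
          Finset.sum_le_sum (fun i _ => hterm i)
  · have h1 : Lbar ≤ ∑ i, Li i (θ, wi i) := hlb θ wi
    have h2 : (0:ℝ) ≤ ((ρ - 5 * L) / 2) * ∑ i, ‖θi i - θ‖^2 := by
      apply mul_nonneg (by linarith)
      exact Finset.sum_nonneg fun i _ => sq_nonneg _
    linarith
end
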